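/- Let r ≥ 1 and let z = (z₀⁽¹⁾, z₁⁽¹⁾, z₂⁽¹⁾, z₀⁽²⁾) ∈ Mat(2r × 4r, ℂ) be written in blocks in Mat(2r × r, ℂ), and assume det(z₀⁽¹⁾ | z₁⁽¹⁾) ≠ 0 and det(z₀⁽¹⁾ | z₀⁽²⁾) ≠ 0. Then there exist g ∈ GL(2r, ℂ), h ∈ H_{(3,1)}, and x ∈ Mat(r×r, ℂ) such that g · z · h is the 2r×4r matrix with block rows (1_r, 0, 0, 0) and (0, 1_r, x, 1_r). -/

import Mathlib

open Matrix

/-- The `2r × nr` matrix assembled from `n` block columns of size `2r × r`. -/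
def ofBlockCols (r n : ℕ) (z : Fin n → Matrix (Fin r ⊕ Fin r) (Fin r) ℂ) :
    Matrix (Fin r ⊕ Fin r) (Fin n × Fin r) ℂ :=
  Matrix.of fun i jk => z jk.1 i jk.2

/-- The `nr × nr` matrix assembled from an `n × n` array of `r × r` blocks. -/
def ofBlockMat (r n : ℕ) (H : Fin n → Fin n → Matrix (Fin r) (Fin r) ℂ) :
    Matrix (Fin n × Fin r) (Fin n × Fin r) ℂ :=
  Matrix.of fun jk lk => H jk.1 lk.1 jk.2 lk.2

lemma mul_ofBlockCols (r n : ℕ) (M : Matrix (Fin r ⊕ Fin r) (Fin r ⊕ Fin r) ℂ)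
    (z : Fin n → Matrix (Fin r ⊕ Fin r) (Fin r) ℂ) :
    M * ofBlockCols r n z = ofBlockCols r n (fun j => M * z j) := by
  ext i ⟨j, k⟩
  simp [ofBlockCols, Matrix.mul_apply]

lemma ofBlockCols_mul_ofBlockMat (r n : ℕ)
    (z : Fin n → Matrix (Fin r ⊕ Fin r) (Fin r) ℂ)
    (H : Fin n → Fin n → Matrix (Fin r) (Fin r) ℂ) :
    ofBlockCols r n z * ofBlockMat r n H =
      ofBlockCols r n (fun l => ∑ j, z j * H j l) := by
  ext i ⟨l, k⟩
  simp [ofBlockCols, ofBlockMat, Matrix.mul_apply, Fintype.sum_prod_type,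
    Matrix.sum_apply]

set_option maxHeartbeats 1000000 in
/-- Normal form lemma (form `x₁`) for `(m, N) = (2r, 4r)`, partition `λ = (3,1)`:
`z = (z₀⁽¹⁾, z₁⁽¹⁾, z₂⁽¹⁾, z₀⁽²⁾)` with `det(z₀⁽¹⁾ | z₁⁽¹⁾) ≠ 0` and
`det(z₀⁽¹⁾ | z₀⁽²⁾) ≠ 0` can be brought, by the action of `GL(2r, ℂ) × H_{(3,1)}`,
to the normal form with block rows `(1_r, 0, 0, 0)` and `(0, 1_r, x, 1_r)`. -/
theorem normal_form_partition_31_first (r : ℕ) (hr : 1 ≤ r)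
    (z : Fin 4 → Matrix (Fin r ⊕ Fin r) (Fin r) ℂ)
    (h01 : (fromCols (z 0) (z 1)).det ≠ 0)
    (h03 : (fromCols (z 0) (z 3)).det ≠ 0) :
    ∃ (g : GL (Fin r ⊕ Fin r) ℂ) (h₀ k : GL (Fin r) ℂ)
      (h₁ h₂ : Matrix (Fin r) (Fin r) ℂ) (x : Matrix (Fin r) (Fin r) ℂ),
      (g : Matrix (Fin r ⊕ Fin r) (Fin r ⊕ Fin r) ℂ) * ofBlockCols r 4 z *
          ofBlockMat r 4
            ![![(h₀ : Matrix (Fin r) (Fin r) ℂ), h₁, h₂, 0],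
              ![0, (h₀ : Matrix (Fin r) (Fin r) ℂ), h₁, 0],
              ![0, 0, (h₀ : Matrix (Fin r) (Fin r) ℂ), 0],
              ![0, 0, 0, (k : Matrix (Fin r) (Fin r) ℂ)]] =
        ofBlockCols r 4
          ![fromRows 1 0, fromRows 0 1, fromRows 0 x, fromRows 0 1] := by
  classical
  set A := fromCols (z 0) (z 3) with hA_def
  have hAdet : IsUnit A.det := isUnit_iff_ne_zero.mpr h03
  have hAinvA : A⁻¹ * A = 1 := nonsing_inv_mul A hAdet
  -- A⁻¹ * z 0 and A⁻¹ * z 3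
  have hz0 : A⁻¹ * z 0 = fromRows 1 0 := by
    have : A * (fromRows 1 0 : Matrix (Fin r ⊕ Fin r) (Fin r) ℂ) = z 0 := by
      rw [hA_def, fromCols_mul_fromRows]; simp
    rw [← this, ← Matrix.mul_assoc, hAinvA, Matrix.one_mul]
  have hz3 : A⁻¹ * z 3 = fromRows 0 1 := by
    have : A * (fromRows 0 1 : Matrix (Fin r ⊕ Fin r) (Fin r) ℂ) = z 3 := by
      rw [hA_def, fromCols_mul_fromRows]; simp
    rw [← this, ← Matrix.mul_assoc, hAinvA, Matrix.one_mul]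
  set a := toRows₁ (A⁻¹ * z 1) with ha_def
  set b := toRows₂ (A⁻¹ * z 1) with hb_def
  set p := toRows₁ (A⁻¹ * z 2) with hp_def
  set q := toRows₂ (A⁻¹ * z 2) with hq_def
  have hz1 : A⁻¹ * z 1 = fromRows a b := (fromRows_toRows _).symm
  have hz2 : A⁻¹ * z 2 = fromRows p q := (fromRows_toRows _).symm
  -- b is invertible
  have hAinv : A⁻¹.det ≠ 0 := by
    rw [Matrix.det_nonsing_inv]
    simpa [Ring.inverse_eq_inv] using inv_ne_zero h03
  have hbdet : b.det ≠ 0 := by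
    have h1 : A⁻¹ * fromCols (z 0) (z 1) = fromBlocks 1 a 0 b := by
      rw [mul_fromCols, hz0, hz1, fromCols_fromRows_eq_fromBlocks]
    have h2 : (A⁻¹ * fromCols (z 0) (z 1)).det = b.det := by
      rw [h1, det_fromBlocks_zero₂₁, det_one, one_mul]
    have h3 : A⁻¹.det * (fromCols (z 0) (z 1)).det = b.det := by
      rw [← det_mul, h2]
    rw [← h3]
    exact mul_ne_zero hAinv h01
  have hbU : IsUnit b.det := isUnit_iff_ne_zero.mpr hbdet
  have hbinvb : b⁻¹ * b = 1 := nonsing_inv_mul b hbU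
  have hbunit : IsUnit b := (isUnit_iff_isUnit_det b).mpr hbU
  -- the GL(2r) element
  set D : Matrix (Fin r ⊕ Fin r) (Fin r ⊕ Fin r) ℂ := fromBlocks 1 0 0 b⁻¹ with hD_def
  have hDdet : IsUnit D.det := by
    rw [hD_def, det_fromBlocks_zero₂₁, det_one, one_mul]
    exact isUnit_iff_ne_zero.mpr (by
      rw [Matrix.det_nonsing_inv]
      simpa [Ring.inverse_eq_inv] using inv_ne_zero hbdet)
  have hGU : IsUnit (D * A⁻¹) := by
    apply ((isUnit_iff_isUnit_det _).mpr hDdet).mul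
    exact (isUnit_iff_isUnit_det _).mpr (isUnit_nonsing_inv_det A hAdet)
  refine ⟨hGU.unit, 1, hbunit.unit, -a, a * a - p, b⁻¹ * q - a, ?_⟩
  rw [hGU.unit_spec, mul_ofBlockCols, ofBlockCols_mul_ofBlockMat]
  refine congrArg (ofBlockCols r 4) (funext fun l => ?_)
  have e0 : D * A⁻¹ * z 0 = fromRows 1 0 := by
    rw [Matrix.mul_assoc, hz0, hD_def, fromBlocks_mul_fromRows]
    simp
  have e1 : D * A⁻¹ * z 1 = fromRows a 1 := by
    rw [Matrix.mul_assoc, hz1, hD_def, fromBlocks_mul_fromRows]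
    simp [hbinvb]
  have e2 : D * A⁻¹ * z 2 = fromRows p (b⁻¹ * q) := by
    rw [Matrix.mul_assoc, hz2, hD_def, fromBlocks_mul_fromRows]
    simp
  have e3 : D * A⁻¹ * z 3 = fromRows 0 b⁻¹ := by
    rw [Matrix.mul_assoc, hz3, hD_def, fromBlocks_mul_fromRows]
    simp
  rw [Fin.sum_univ_four]
  have hadd : ∀ (A B C D : Matrix (Fin r) (Fin r) ℂ),
      fromRows A B + fromRows C D = fromRows (A + C) (B + D) := by
    intro A B C D
    ext (i | i) j <;> simp [fromRows] <;> rfl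
  fin_cases l <;>
    simp [e0, e1, e2, e3, hadd, hbinvb, fromRows_mul, Matrix.vecHead, Matrix.vecTail] <;>
    (try congr 1) <;>
    abel
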